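/- Let H be a connected k-uniform hypergraph with at least two vertices. Then the smallest signless Laplacian eigenvalue satisfies q_min(H) ≤ d_max − 1/(k-1), where d_max is the maximum degree. -/

import Mathlib

open Finset

/-- The set of hyperedges containing both `i` and `j`. -/
def edgesBetween {n : ℕ} (E : Finset (Finset (Fin n))) (i j : Fin n) :
    Finset (Finset (Fin n)) :=
  E.filter fun e => i ∈ e ∧ j ∈ e

/-- The degree of vertex `i`: the number of hyperedges containing `i`. -/
def hdeg {n : ℕ} (E : Finset (Finset (Fin n))) (i : Fin n) : ℕ :=
  (E.filter fun e => i ∈ e).card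

/-- Two (distinct) vertices are adjacent if some hyperedge contains both. -/
def Adj {n : ℕ} (E : Finset (Finset (Fin n))) (i j : Fin n) : Prop :=
  i ≠ j ∧ ∃ e ∈ E, i ∈ e ∧ j ∈ e

/-- The neighbours of a vertex. -/
noncomputable def neighbors {n : ℕ} (E : Finset (Finset (Fin n))) (i : Fin n) :
    Finset (Fin n) :=
  @Finset.filter _ (fun j => Adj E i j) (Classical.decPred _) Finset.univ

/-- Banerjee's adjacency matrix of a hypergraph: `A i j = ∑_{e ∋ i,j} 1/(|e|-1)`. -/
noncomputable def adjMat {n : ℕ} (E : Finset (Finset (Fin n))) :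
    Matrix (Fin n) (Fin n) ℝ :=
  Matrix.of fun i j =>
    if i = j then 0 else ∑ e ∈ edgesBetween E i j, 1 / ((e.card : ℝ) - 1)

/-- The signless Laplacian matrix `Q = D + A`. -/
noncomputable def signlessLap {n : ℕ} (E : Finset (Finset (Fin n))) :
    Matrix (Fin n) (Fin n) ℝ :=
  Matrix.diagonal (fun i => (hdeg E i : ℝ)) + adjMat E

/-- Largest eigenvalue of a real matrix. -/
noncomputable def qmax {n : ℕ} (M : Matrix (Fin n) (Fin n) ℝ) : ℝ :=
  sSup (spectrum ℝ M)

/-- Smallest eigenvalue of a real matrix. -/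
noncomputable def qmin {n : ℕ} (M : Matrix (Fin n) (Fin n) ℝ) : ℝ :=
  sInf (spectrum ℝ M)

/-- A hypergraph is `k`-uniform if every hyperedge has exactly `k` vertices. -/
def IsUniform {n : ℕ} (k : ℕ) (E : Finset (Finset (Fin n))) : Prop :=
  ∀ e ∈ E, e.card = k

/-- A hypergraph is connected if any two vertices are joined by a walk. -/
def Conn {n : ℕ} (E : Finset (Finset (Fin n))) : Prop :=
  ∀ i j : Fin n, Relation.ReflTransGen (Adj E) i j

open Matrix


lemma edgesBetween_comm {n : ℕ} (E : Finset (Finset (Fin n))) (i j : Fin n) :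
    edgesBetween E i j = edgesBetween E j i := by
  simp [edgesBetween, and_comm]

lemma signlessLap_isHermitian {n : ℕ} (E : Finset (Finset (Fin n))) :
    (signlessLap E).IsHermitian := by
  apply Matrix.IsHermitian.add
  · exact Matrix.isHermitian_diagonal _
  · ext i j
    simp only [Matrix.conjTranspose_apply, adjMat, Matrix.of_apply, star_trivial]
    rcases eq_or_ne i j with rfl | h
    · simp
    · rw [if_neg h.symm, if_neg h, edgesBetween_comm]

theorem stmt_11 (n k : ℕ) (hn : 2 ≤ n) (hk : 2 ≤ k) (E : Finset (Finset (Fin n)))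
    (hU : IsUniform k E) (hc : Conn E) :
    qmin (signlessLap E) ≤ (⨆ i : Fin n, (hdeg E i : ℝ)) - 1 / ((k : ℝ) - 1) := by
  obtain ⟨i, j, hij⟩ : ∃ i j : Fin n, Adj E i j := by
    have h01 : (⟨0, by omega⟩ : Fin n) ≠ ⟨1, by omega⟩ := by simp [Fin.ext_iff]
    rcases Relation.ReflTransGen.cases_head (hc ⟨0, by omega⟩ ⟨1, by omega⟩) with heq | ⟨j, hadj, -⟩
    · exact absurd heq h01
    · exact ⟨_, j, hadj⟩

  haveI : NeZero n := ⟨by omega⟩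
  set Q := signlessLap E with hQdef
  have hQ : Q.IsHermitian := signlessLap_isHermitian E
  set T := Matrix.toEuclideanLin Q with hTdef
  have hT : T.IsSymmetric := (Matrix.isHermitian_iff_isSymmetric).mp hQ
  haveI : Nontrivial (EuclideanSpace ℝ (Fin n)) := by
    refine ⟨EuclideanSpace.single 0 1, 0, fun h => ?_⟩
    have := congrFun congr(⇑$h) 0
    simp at this
  have hmin := hT.hasEigenvalue_iInf_of_finiteDimensional
  set μ : ℝ := ⨅ x : { x : EuclideanSpace ℝ (Fin n) // x ≠ 0 },
      RCLike.re (inner ℝ (T x) (x : EuclideanSpace ℝ (Fin n)) : ℝ) / ‖(x : EuclideanSpace ℝ (Fin n))‖ ^ 2 with hμdef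
  have hμspec : μ ∈ spectrum ℝ Q := by
    have h1 : μ ∈ spectrum ℝ T := hmin.mem_spectrum
    rwa [hTdef, Matrix.spectrum_toEuclideanLin] at h1
  have hbdd : BddBelow (spectrum ℝ Q) := by
    rw [hQ.spectrum_real_eq_range_eigenvalues]
    exact (Set.finite_range _).bddBelow
  have h1 : qmin Q ≤ μ := csInf_le hbdd hμspec
  -- the test vector
  set y : Fin n → ℝ := Pi.single i 1 - Pi.single j 1 with hydef
  have hne : i ≠ j := hij.1
  set x : EuclideanSpace ℝ (Fin n) := (WithLp.equiv 2 (Fin n → ℝ)).symm y with hxdef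
  have hx0 : x ≠ 0 := by
    intro h
    have := congrFun congr(⇑(WithLp.equiv 2 (Fin n → ℝ)) $h) i
    simp [hxdef, hydef, Pi.single_apply, hne, hne.symm] at this
  -- bounded below Rayleigh quotients
  set T' : EuclideanSpace ℝ (Fin n) →L[ℝ] EuclideanSpace ℝ (Fin n) :=
    LinearMap.toContinuousLinearMap T with hT'def
  have hbdd2 : BddBelow (Set.range fun x : { x : EuclideanSpace ℝ (Fin n) // x ≠ 0 } =>
      RCLike.re (inner ℝ (T x) (x : EuclideanSpace ℝ (Fin n)) : ℝ) / ‖(x : EuclideanSpace ℝ (Fin n))‖ ^ 2) := by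
    refine ⟨-‖T'‖, ?_⟩
    rintro _ ⟨z, rfl⟩
    have hz : (0:ℝ) < ‖(z : EuclideanSpace ℝ (Fin n))‖ := norm_pos_iff.mpr z.2
    rw [le_div_iff₀ (by positivity)]
    have h2 : |(inner ℝ (T z) (z : EuclideanSpace ℝ (Fin n)) : ℝ)| ≤ ‖T (z : EuclideanSpace ℝ (Fin n))‖ * ‖(z : EuclideanSpace ℝ (Fin n))‖ :=
      abs_real_inner_le_norm _ _
    have h3 : ‖T (z : EuclideanSpace ℝ (Fin n))‖ ≤ ‖T'‖ * ‖(z : EuclideanSpace ℝ (Fin n))‖ :=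
      T'.le_opNorm _
    have h4 := (abs_le.mp h2).1
    have h5 : (0:ℝ) ≤ ‖T'‖ := norm_nonneg _
    simp only [RCLike.re_to_real]
    nlinarith [norm_nonneg (T (z : EuclideanSpace ℝ (Fin n)))]
  have h2 : μ ≤ RCLike.re (inner ℝ (T x) (x : EuclideanSpace ℝ (Fin n)) : ℝ) / ‖x‖ ^ 2 :=
    ciInf_le hbdd2 ⟨x, hx0⟩
  -- compute the quadratic form
  have hTx : T x = (WithLp.equiv 2 (Fin n → ℝ)).symm (Q *ᵥ y) :=
    Matrix.toEuclideanLin_apply_piLp_toLp Q y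
  have hinner : (inner ℝ (T x) (x : EuclideanSpace ℝ (Fin n)) : ℝ) = (Q *ᵥ y) ⬝ᵥ y := by
    rw [hTx, hxdef, PiLp.inner_apply]
    simp [dotProduct, RCLike.inner_apply, mul_comm]
  have hQy : ∀ v, (Q *ᵥ y) v = Q v i - Q v j := by
    intro v
    simp [hydef, Matrix.mulVec_sub, Matrix.mulVec_single]
  have hdot : ∀ a : Fin n → ℝ, a ⬝ᵥ y = a i - a j := by
    intro a
    simp [hydef, dotProduct_sub, dotProduct_single]
  have hform : (Q *ᵥ y) ⬝ᵥ y = Q i i + Q j j - Q i j - Q j i := by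
    rw [hdot, hQy, hQy]; ring
  have hnorm : ‖x‖ ^ 2 = 2 := by
    rw [← real_inner_self_eq_norm_sq]
    have : (inner ℝ x (x : EuclideanSpace ℝ (Fin n)) : ℝ) = y ⬝ᵥ y := by
      rw [hxdef, PiLp.inner_apply]
      simp [dotProduct, RCLike.inner_apply, sq]
    rw [this, hdot]
    simp [hydef, Pi.single_apply, hne, hne.symm]
    norm_num
  -- entries of Q
  have hk1 : (0:ℝ) < (k:ℝ) - 1 := by
    have : (2:ℝ) ≤ (k:ℝ) := by exact_mod_cast hk
    linarith
  have hQii : Q i i = (hdeg E i : ℝ) := by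
    simp [hQdef, signlessLap, adjMat, Matrix.add_apply]
  have hQjj : Q j j = (hdeg E j : ℝ) := by
    simp [hQdef, signlessLap, adjMat, Matrix.add_apply]
  have hsum : ∑ e ∈ edgesBetween E i j, 1 / ((e.card : ℝ) - 1)
      = ((edgesBetween E i j).card : ℝ) / ((k:ℝ) - 1) := by
    rw [Finset.sum_congr rfl (fun e he => by
      rw [hU e (Finset.mem_filter.mp he).1])]
    rw [Finset.sum_const, nsmul_eq_mul, mul_one_div]
  have hQij : Q i j = ((edgesBetween E i j).card : ℝ) / ((k:ℝ) - 1) := by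
    rw [hQdef]
    simp only [signlessLap, Matrix.add_apply, Matrix.diagonal_apply_ne _ hne, adjMat,
      Matrix.of_apply, if_neg hne, zero_add]
    exact hsum
  have hQji : Q j i = ((edgesBetween E i j).card : ℝ) / ((k:ℝ) - 1) := by
    rw [hQdef]
    simp only [signlessLap, Matrix.add_apply, Matrix.diagonal_apply_ne _ hne.symm, adjMat,
      Matrix.of_apply, if_neg hne.symm, zero_add, edgesBetween_comm E j i]
    exact hsum
  have hm1 : (1:ℝ) ≤ ((edgesBetween E i j).card : ℝ) := by
    have : (edgesBetween E i j).Nonempty := by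
      obtain ⟨_, e, he, hie, hje⟩ := hij
      exact ⟨e, Finset.mem_filter.mpr ⟨he, hie, hje⟩⟩
    exact_mod_cast Finset.card_pos.mpr this
  -- degree bounds
  have hdM : ∀ v : Fin n, (hdeg E v : ℝ) ≤ ⨆ i : Fin n, (hdeg E i : ℝ) := fun v =>
    le_ciSup (Set.Finite.bddAbove (Set.finite_range (fun i : Fin n => (hdeg E i : ℝ)))) v
  -- final arithmetic
  have hray : RCLike.re (inner ℝ (T x) (x : EuclideanSpace ℝ (Fin n)) : ℝ) / ‖x‖ ^ 2
      ≤ (⨆ i : Fin n, (hdeg E i : ℝ)) - 1 / ((k:ℝ) - 1) := by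
    rw [RCLike.re_to_real, hinner, hform, hnorm, hQii, hQjj, hQij, hQji]
    have h5 : 1 / ((k:ℝ) - 1) ≤ ((edgesBetween E i j).card : ℝ) / ((k:ℝ) - 1) := by
      gcongr
    have h6 := hdM i
    have h7 := hdM j
    linarith
  calc qmin Q ≤ μ := h1
    _ ≤ _ := h2
    _ ≤ _ := hray
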